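/- Let K be a field of characteristic p > 0 containing the prime field K' = F_p, and let C = ∩_{(a₁,…,a_N) ∈ (F_p)^N} (x₁ - a₁x₀, …, x_N - a_Nx₀) ⊆ K[x₀,…,x_N] be the ideal of the grid of p^N points with prime-field coordinates in affine N-space. Then C equals the complete intersection ideal C' = (x₁(x₁^{p-1} - x₀^{p-1}), …, x_N(x_N^{p-1} - x₀^{p-1})). -/

import Mathlib

open MvPolynomial

/-- reduced exponent -/
def rdc (p a : ℕ) : ℕ := if a = 0 then 0 else (a - 1) % (p - 1) + 1

lemma rdc_lt {p : ℕ} (hp : 2 ≤ p) (a : ℕ) : rdc p a < p := by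
  unfold rdc; split
  · omega
  · have := Nat.mod_lt (a - 1) (y := p - 1) (by omega); omega

lemma rdc_of_lt {p a : ℕ} (ha : a < p) : rdc p a = a := by
  unfold rdc; split
  · omega
  · rw [Nat.mod_eq_of_lt (by omega)]; omega

lemma rdc_le (p a : ℕ) : rdc p a ≤ a := by
  unfold rdc; split
  · omega
  · have := Nat.mod_le (a - 1) (p - 1); omega

lemma rdc_step {p a : ℕ} (hp : 2 ≤ p) (ha : p ≤ a) : rdc p (a - (p - 1)) = rdc p a := by
  unfold rdc
  rw [if_neg (by omega), if_neg (by omega)]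
  have h1 : a - (p - 1) - 1 = a - 1 - (p - 1) := by omega
  rw [h1, ← Nat.mod_eq_sub_mod (by omega)]

lemma univ_vanish {p : ℕ} (hp : p.Prime) {K : Type} [Field K] [CharP K p]
    (f : Polynomial K) (hd : f.natDegree < p) (hz : ∀ k < p, f.eval ((k : ℕ) : K) = 0) :
    f = 0 := by
  classical
  apply Polynomial.eq_zero_of_natDegree_lt_card_of_eval_eq_zero' f
    ((Finset.range p).image (Nat.cast : ℕ → K))
  · intro i hi
    simp only [Finset.mem_image, Finset.mem_range] at hi
    obtain ⟨k, hk, rfl⟩ := hi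
    exact hz k hk
  · rwa [Finset.card_image_of_injOn, Finset.card_range]
    intro a ha b hb hab
    exact CharP.natCast_injOn_Iio K p (by simpa using ha) (by simpa using hb) hab

lemma mv_vanish {p : ℕ} (hp : p.Prime) {K : Type} [Field K] [CharP K p] :
    ∀ (n : ℕ) (h : MvPolynomial (Fin n) K), (∀ i, degreeOf i h < p) →
      (∀ a : Fin n → K, (∀ i, a i ∈ Set.range (Nat.cast : ℕ → K)) → eval a h = 0) →
      h = 0 := by
  intro n
  induction n with
  | zero =>
    intro h _ hz
    obtain ⟨c, rfl⟩ := MvPolynomial.C_surjective (Fin 0) h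
    have := hz (fun i => i.elim0) (fun i => i.elim0)
    rw [eval_C] at this
    rw [this, map_zero]
  | succ n ih =>
    intro h hdeg hz
    set q := finSuccEquiv K n h with hq
    have hc : ∀ k : ℕ, q.coeff k = 0 := by
      intro k
      apply ih
      · intro i
        exact lt_of_le_of_lt (degreeOf_coeff_finSuccEquiv h i k) (hdeg i.succ)
      · intro a ha
        have hu : (q.map (eval a)) = 0 := by
          apply univ_vanish hp
          · refine lt_of_le_of_lt Polynomial.natDegree_map_le ?_
            rw [hq, natDegree_finSuccEquiv]; exact hdeg 0
          · intro m hm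
            rw [← eval_eq_eval_mv_eval']
            apply hz
            intro i
            refine Fin.cases ⟨m, rfl⟩ (fun j => ha j) i
        have := congrArg (fun r => Polynomial.coeff r k) hu
        simpa [Polynomial.coeff_map] using this
    have hq0 : q = 0 := Polynomial.ext (fun k => by rw [hc k, Polynomial.coeff_zero])
    exact (finSuccEquiv K n).injective (by rw [← hq, hq0, map_zero])

lemma cast_pow_char {p : ℕ} (hp : p.Prime) {K : Type} [Field K] [CharP K p] (k : ℕ) :
    ((k : K)) ^ p = (k : K) := by
  haveI := Fact.mk hp
  let f := ZMod.castHom (dvd_refl p) K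
  have h1 : f (k : ZMod p) = (k : K) := map_natCast f k
  calc (k : K) ^ p = (f (k : ZMod p)) ^ p := by rw [h1]
    _ = f ((k : ZMod p) ^ p) := by rw [map_pow]
    _ = f (k : ZMod p) := by rw [ZMod.pow_card]
    _ = (k : K) := h1

lemma gen_factor {p : ℕ} (hp : p.Prime) {R : Type} [CommRing R] [CharP R p]
    (x y c : R) (hc : c ^ p = c) :
    x * (x ^ (p - 1) - y ^ (p - 1)) = (x - c * y) * ((x - c * y) ^ (p - 1) - y ^ (p - 1)) := by
  haveI := Fact.mk hp
  have hp1 : p - 1 + 1 = p := Nat.succ_pred_eq_of_pos hp.pos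
  have hz : ∀ z : R, z * z ^ (p - 1) = z ^ p := fun z => by
    conv_rhs => rw [← hp1]
    rw [pow_succ]; ring
  have hsub : (x - c * y) ^ p = x ^ p - c ^ p * y ^ p := by
    rw [sub_pow_char, mul_pow]
  linear_combination hz x - hz (x - c * y) - hsub - c * hz y + y ^ p * hc

lemma red_pow {p : ℕ} (hp : 2 ≤ p) {R : Type} [CommRing R] {I : Ideal R} {x y : R}
    (hI : x ^ p - x * y ^ (p - 1) ∈ I) :
    ∀ a b : ℕ, x ^ a * y ^ b - x ^ (rdc p a) * y ^ (b + (a - rdc p a)) ∈ I := by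
  intro a
  induction a using Nat.strong_induction_on with
  | _ a ih =>
    intro b
    by_cases ha : a < p
    · rw [rdc_of_lt ha, Nat.sub_self, Nat.add_zero, sub_self]
      exact I.zero_mem
    · obtain ⟨a', rfl⟩ : ∃ a', a = a' + p := ⟨a - p, by omega⟩
      have e1 : x ^ (a' + p) * y ^ b - x ^ (a' + 1) * y ^ (b + (p - 1)) =
          (x ^ a' * y ^ b) * (x ^ p - x * y ^ (p - 1)) := by
        rw [pow_add, pow_add x a' 1, pow_one, pow_add y b (p - 1)]; ring
      have h1 : x ^ (a' + p) * y ^ b - x ^ (a' + 1) * y ^ (b + (p - 1)) ∈ I :=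
        e1 ▸ I.mul_mem_left _ hI
      have h2 := ih (a' + 1) (by omega) (b + (p - 1))
      have hr : rdc p (a' + p) = rdc p (a' + 1) := by
        rw [← rdc_step hp (p := p) (a := a' + p) (by omega)]
        congr 1; omega
      rw [hr]
      have hle := rdc_le p (a' + 1)
      have hexp : b + (p - 1) + (a' + 1 - rdc p (a' + 1)) = b + (a' + p - rdc p (a' + 1)) := by
        omega
      rw [hexp] at h2
      have e2 : x ^ (a' + p) * y ^ b - x ^ (rdc p (a' + 1)) * y ^ (b + (a' + p - rdc p (a' + 1))) =
          (x ^ (a' + p) * y ^ b - x ^ (a' + 1) * y ^ (b + (p - 1))) +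
          (x ^ (a' + 1) * y ^ (b + (p - 1)) -
            x ^ (rdc p (a' + 1)) * y ^ (b + (a' + p - rdc p (a' + 1)))) := by ring
      rw [e2]
      exact I.add_mem h1 h2

lemma red_prod {p N : ℕ} (hp : 2 ≤ p) {K : Type} [CommRing K]
    {I : Ideal (MvPolynomial (Fin (N + 1)) K)}
    (hI : ∀ i : Fin N, (X i.succ ^ p - X i.succ * X 0 ^ (p - 1) :
      MvPolynomial (Fin (N + 1)) K) ∈ I) (m : Fin N → ℕ) :
    ∀ (T : Finset (Fin N)) (b : ℕ),
      (X 0 ^ b * ∏ i ∈ T, X i.succ ^ m i : MvPolynomial (Fin (N + 1)) K) -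
        X 0 ^ (b + ∑ i ∈ T, (m i - rdc p (m i))) * ∏ i ∈ T, X i.succ ^ rdc p (m i) ∈ I := by
  intro T
  induction T using Finset.induction_on with
  | empty => intro b; simp
  | insert j T hj ih =>
    intro b
    have h1 := red_pow hp (hI j) (m j) b
    have h2 := ih (b + (m j - rdc p (m j)))
    have e : (X 0 ^ b * ∏ i ∈ insert j T, X i.succ ^ m i : MvPolynomial (Fin (N + 1)) K) -
        X 0 ^ (b + ∑ i ∈ insert j T, (m i - rdc p (m i))) * ∏ i ∈ insert j T, X i.succ ^ rdc p (m i) =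
        (∏ i ∈ T, X i.succ ^ m i) *
          (X j.succ ^ m j * X 0 ^ b -
            X j.succ ^ rdc p (m j) * X 0 ^ (b + (m j - rdc p (m j)))) +
        X j.succ ^ rdc p (m j) *
          ((X 0 ^ (b + (m j - rdc p (m j))) * ∏ i ∈ T, X i.succ ^ m i) -
            X 0 ^ (b + (m j - rdc p (m j)) + ∑ i ∈ T, (m i - rdc p (m i))) *
              ∏ i ∈ T, X i.succ ^ rdc p (m i)) := by
      rw [Finset.prod_insert hj, Finset.prod_insert hj, Finset.sum_insert hj,
        show b + ((m j - rdc p (m j)) + ∑ i ∈ T, (m i - rdc p (m i))) =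
          b + (m j - rdc p (m j)) + ∑ i ∈ T, (m i - rdc p (m i)) from by omega]
      ring
    rw [e]
    exact I.add_mem (I.mul_mem_left _ h1) (I.mul_mem_left _ h2)

noncomputable def redm (p N : ℕ) (m : Fin (N + 1) →₀ ℕ) : Fin (N + 1) →₀ ℕ :=
  Finsupp.equivFunOnFinite.symm
    (Fin.cases (m 0 + ∑ i : Fin N, (m i.succ - rdc p (m i.succ)))
      (fun i => rdc p (m i.succ)))

lemma redm_zero (p N : ℕ) (m : Fin (N + 1) →₀ ℕ) :
    redm p N m 0 = m 0 + ∑ i : Fin N, (m i.succ - rdc p (m i.succ)) := by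
  simp [redm]

lemma redm_succ (p N : ℕ) (m : Fin (N + 1) →₀ ℕ) (i : Fin N) :
    redm p N m i.succ = rdc p (m i.succ) := by
  simp [redm]

lemma monomial_expand {N : ℕ} {K : Type} [CommRing K] (m : Fin (N + 1) →₀ ℕ) (c : K) :
    (monomial m c : MvPolynomial (Fin (N + 1)) K) =
      C c * (X 0 ^ m 0 * ∏ i : Fin N, X i.succ ^ m i.succ) := by
  rw [monomial_eq]
  congr 1
  rw [Finsupp.prod_fintype _ _ (fun i => pow_zero _), Fin.prod_univ_succ]

lemma red_monomial {p N : ℕ} (hp : 2 ≤ p) {K : Type} [CommRing K]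
    {I : Ideal (MvPolynomial (Fin (N + 1)) K)}
    (hI : ∀ i : Fin N, (X i.succ ^ p - X i.succ * X 0 ^ (p - 1) :
      MvPolynomial (Fin (N + 1)) K) ∈ I) (m : Fin (N + 1) →₀ ℕ) (c : K) :
    (monomial m c - monomial (redm p N m) c : MvPolynomial (Fin (N + 1)) K) ∈ I := by
  have h := red_prod hp hI (fun i => m i.succ) Finset.univ (m 0)
  have e : (monomial m c - monomial (redm p N m) c : MvPolynomial (Fin (N + 1)) K) =
      C c * ((X 0 ^ m 0 * ∏ i : Fin N, X i.succ ^ m i.succ) -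
        X 0 ^ (m 0 + ∑ i : Fin N, (m i.succ - rdc p (m i.succ))) *
          ∏ i : Fin N, X i.succ ^ rdc p (m i.succ)) := by
    rw [monomial_expand, monomial_expand, redm_zero, mul_sub]
    simp only [redm_succ]
  rw [e]
  exact I.mul_mem_left _ h

lemma red_poly {p N : ℕ} (hp : 2 ≤ p) {K : Type} [CommRing K]
    {I : Ideal (MvPolynomial (Fin (N + 1)) K)}
    (hI : ∀ i : Fin N, (X i.succ ^ p - X i.succ * X 0 ^ (p - 1) :
      MvPolynomial (Fin (N + 1)) K) ∈ I) (f : MvPolynomial (Fin (N + 1)) K) :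
    ∃ g : MvPolynomial (Fin (N + 1)) K, f - g ∈ I ∧
      ∀ m ∈ g.support, ∀ i : Fin N, m i.succ < p := by
  classical
  refine ⟨∑ m ∈ f.support, monomial (redm p N m) (coeff m f), ?_, ?_⟩
  · have : f - ∑ m ∈ f.support, monomial (redm p N m) (coeff m f) =
        ∑ m ∈ f.support, (monomial m (coeff m f) - monomial (redm p N m) (coeff m f)) := by
      rw [Finset.sum_sub_distrib, support_sum_monomial_coeff]
    rw [this]
    exact Ideal.sum_mem I (fun m _ => red_monomial hp hI m _)
  · intro m hm i
    have := MvPolynomial.support_sum hm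
    simp only [Finset.mem_biUnion] at this
    obtain ⟨m', _, hm'⟩ := this
    have hsub := MvPolynomial.support_monomial_subset hm'
    simp only [Finset.mem_singleton] at hsub
    subst hsub
    rw [redm_succ]
    exact rdc_lt hp _

lemma mul_pow_sub_one' {M : Type} [Monoid M] {p : ℕ} (hp : p ≠ 0) (z : M) :
    z * z ^ (p - 1) = z ^ p := by
  conv_rhs => rw [← Nat.succ_pred_eq_of_pos (Nat.pos_of_ne_zero hp), pow_succ']
  rfl

lemma phi_monomial {N : ℕ} {K : Type} [CommRing K] (a : Fin N → K)
    (m : Fin (N + 1) →₀ ℕ) (c : K) :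
    aeval (Fin.cases Polynomial.X (fun i => Polynomial.C (a i) * Polynomial.X) :
        Fin (N + 1) → Polynomial K) (monomial m c) =
      Polynomial.C (c * ∏ i : Fin N, a i ^ m i.succ) * Polynomial.X ^ (∑ j, m j) := by
  rw [aeval_monomial, Finsupp.prod_fintype _ _ (fun i => pow_zero _), Fin.prod_univ_succ,
    Fin.sum_univ_succ]
  simp only [Fin.cases_zero, Fin.cases_succ, mul_pow, ← Polynomial.C_pow]
  rw [Finset.prod_mul_distrib, ← map_prod, Finset.prod_pow_eq_pow_sum, map_mul, pow_add]
  simp only [Polynomial.algebraMap_eq]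
  ring

theorem stmt10 (p N : ℕ) (hp : p.Prime) (hN : 1 ≤ N)
    (K : Type) [Field K] [CharP K p] :
    (⨅ a ∈ {a : Fin N → K | ∀ i, a i ∈ Set.range (Nat.cast : ℕ → K)},
      Ideal.span (Set.range fun i : Fin N =>
        (X i.succ - C (a i) * X 0 : MvPolynomial (Fin (N + 1)) K))) =
    Ideal.span (Set.range fun i : Fin N =>
      (X i.succ * (X i.succ ^ (p - 1) - X 0 ^ (p - 1)) :
        MvPolynomial (Fin (N + 1)) K)) := by
  classical
  have hp2 : 2 ≤ p := hp.two_le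
  have hp0 : p ≠ 0 := hp.ne_zero
  -- generator identity
  have hgen : ∀ i : Fin N,
      (X i.succ * (X i.succ ^ (p - 1) - X 0 ^ (p - 1)) : MvPolynomial (Fin (N + 1)) K) =
      X i.succ ^ p - X i.succ * X 0 ^ (p - 1) := by
    intro i
    rw [mul_sub, mul_pow_sub_one' hp0]
  have hfun : (fun i : Fin N =>
      (X i.succ * (X i.succ ^ (p - 1) - X 0 ^ (p - 1)) : MvPolynomial (Fin (N + 1)) K)) =
      fun i : Fin N => X i.succ ^ p - X i.succ * X 0 ^ (p - 1) := funext hgen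
  set I : Ideal (MvPolynomial (Fin (N + 1)) K) := Ideal.span (Set.range fun i : Fin N =>
      (X i.succ * (X i.succ ^ (p - 1) - X 0 ^ (p - 1)) : MvPolynomial (Fin (N + 1)) K)) with hI
  have hIgen : ∀ i : Fin N,
      (X i.succ ^ p - X i.succ * X 0 ^ (p - 1) : MvPolynomial (Fin (N + 1)) K) ∈ I := by
    intro i
    rw [← hgen i]
    exact Ideal.subset_span ⟨i, rfl⟩
  -- Fermat for casts
  have hfermat : ∀ {c : K}, c ∈ Set.range (Nat.cast : ℕ → K) → c ^ p = c := by
    rintro c ⟨k, rfl⟩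
    exact cast_pow_char hp k
  refine le_antisymm ?_ ?_
  · -- hard direction
    intro f hf
    simp only [Ideal.mem_iInf] at hf
    have hfa : ∀ a : Fin N → K, (∀ i, a i ∈ Set.range (Nat.cast : ℕ → K)) →
        f ∈ Ideal.span (Set.range fun i : Fin N =>
          (X i.succ - C (a i) * X 0 : MvPolynomial (Fin (N + 1)) K)) :=
      fun a ha => hf a ha
    obtain ⟨g, hfg, hgsupp⟩ := red_poly hp2 hIgen f
    suffices hg0 : g = 0 by
      rw [hg0, sub_zero] at hfg
      exact hfg
    -- evaluation maps
    set v : (Fin N → K) → Fin (N + 1) → Polynomial K := fun a =>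
      Fin.cases Polynomial.X (fun i => Polynomial.C (a i) * Polynomial.X) with hv
    have hgz : ∀ a : Fin N → K, (∀ i, a i ∈ Set.range (Nat.cast : ℕ → K)) →
        aeval (v a) g = 0 := by
      intro a ha
      have hfz : aeval (v a) f = 0 := by
        have hle : Ideal.span (Set.range fun i : Fin N =>
            (X i.succ - C (a i) * X 0 : MvPolynomial (Fin (N + 1)) K)) ≤
            RingHom.ker (aeval (v a) : MvPolynomial (Fin (N + 1)) K →ₐ[K] Polynomial K) := by
          rw [Ideal.span_le]
          rintro _ ⟨i, rfl⟩
          simp only [SetLike.mem_coe, RingHom.mem_ker, map_sub, map_mul, aeval_X, aeval_C, hv]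
          simp only [Fin.cases_zero, Fin.cases_succ, Polynomial.algebraMap_eq, sub_self]
        exact hle (hfa a ha)
      have hfgz : aeval (v a) (f - g) = 0 := by
        have hle : I ≤ RingHom.ker (aeval (v a) : MvPolynomial (Fin (N + 1)) K →ₐ[K] Polynomial K) := by
          rw [hI, Ideal.span_le]
          rintro _ ⟨i, rfl⟩
          simp only [SetLike.mem_coe, RingHom.mem_ker]
          rw [hgen i]
          simp only [map_sub, map_pow, map_mul, aeval_X, hv, Fin.cases_zero, Fin.cases_succ]
          rw [mul_pow, ← Polynomial.C_pow, hfermat (ha i), mul_assoc,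
            mul_pow_sub_one' hp0, sub_self]
        exact hle hfg
      rw [map_sub, hfz, zero_sub, neg_eq_zero] at hfgz
      exact hfgz
    -- extract coefficients and use vanishing
    ext m0
    rw [coeff_zero]
    by_cases hm0 : m0 ∈ g.support
    swap
    · exact notMem_support_iff.1 hm0
    set e := ∑ j, m0 j with he
    set tl : (Fin (N + 1) →₀ ℕ) → (Fin N →₀ ℕ) := fun m =>
      Finsupp.equivFunOnFinite.symm (fun i : Fin N => m i.succ) with htl
    have htl_apply : ∀ (m : Fin (N + 1) →₀ ℕ) (i : Fin N), tl m i = m i.succ := by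
      intro m i; simp [htl]
    set h : MvPolynomial (Fin N) K :=
      ∑ m ∈ g.support.filter (fun m => e = ∑ j, m j), monomial (tl m) (coeff m g) with hh
    have heval : ∀ a : Fin N → K, (∀ i, a i ∈ Set.range (Nat.cast : ℕ → K)) →
        eval a h = 0 := by
      intro a ha
      have h1 : aeval (v a) g = ∑ m ∈ g.support,
          Polynomial.C (coeff m g * ∏ i : Fin N, a i ^ m i.succ) *
            Polynomial.X ^ (∑ j, m j) := by
        conv_lhs => rw [← support_sum_monomial_coeff g]
        rw [map_sum]
        exact Finset.sum_congr rfl fun m _ => phi_monomial a m (coeff m g)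
      have h2 : Polynomial.coeff (aeval (v a) g) e =
          ∑ m ∈ g.support.filter (fun m => e = ∑ j, m j),
            coeff m g * ∏ i : Fin N, a i ^ m i.succ := by
        rw [h1, Polynomial.finset_sum_coeff]
        simp only [Polynomial.coeff_C_mul, Polynomial.coeff_X_pow, mul_ite, mul_one, mul_zero]
        rw [Finset.sum_filter]
      have h3 : eval a h = ∑ m ∈ g.support.filter (fun m => e = ∑ j, m j),
          coeff m g * ∏ i : Fin N, a i ^ m i.succ := by
        rw [hh, map_sum]
        refine Finset.sum_congr rfl fun m _ => ?_
        rw [eval_monomial, Finsupp.prod_fintype _ _ (fun i => pow_zero _)]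
        exact congrArg _ (Finset.prod_congr rfl fun i _ => by rw [htl_apply])
      rw [h3, ← h2, hgz a ha, Polynomial.coeff_zero]
    have hdeg : ∀ i : Fin N, degreeOf i h < p := by
      intro i
      rw [degreeOf_lt_iff hp.pos]
      intro m' hm'
      have hb := MvPolynomial.support_sum hm'
      simp only [Finset.mem_biUnion] at hb
      obtain ⟨m, hmfil, hm'm⟩ := hb
      have hsub := MvPolynomial.support_monomial_subset hm'm
      simp only [Finset.mem_singleton] at hsub
      subst hsub
      rw [htl_apply]
      exact hgsupp m (Finset.mem_filter.1 hmfil).1 i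
    have hz : h = 0 := mv_vanish hp N h hdeg heval
    have hcoeff : coeff (tl m0) h = coeff m0 g := by
      rw [hh, coeff_sum]
      simp only [coeff_monomial]
      have hcongr : ∀ m ∈ g.support.filter (fun m => e = ∑ j, m j),
          (if tl m = tl m0 then coeff m g else 0) = if m = m0 then coeff m g else 0 := by
        intro m hm
        rcases Finset.mem_filter.1 hm with ⟨hms, hmd⟩
        by_cases hmm : m = m0
        · rw [hmm, if_pos rfl, if_pos rfl]
        · rw [if_neg hmm, if_neg]
          intro htleq
          apply hmm
          have hsucc : ∀ i : Fin N, m i.succ = m0 i.succ := by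
            intro i
            rw [← htl_apply m i, ← htl_apply m0 i, htleq]
          have hsum : ∑ j, m j = ∑ j, m0 j := by rw [← hmd, he]
          have hzero : m 0 = m0 0 := by
            rw [Fin.sum_univ_succ, Fin.sum_univ_succ] at hsum
            have : ∑ i : Fin N, m i.succ = ∑ i : Fin N, m0 i.succ :=
              Finset.sum_congr rfl fun i _ => hsucc i
            omega
          ext j
          refine Fin.cases hzero hsucc j
      rw [Finset.sum_congr rfl hcongr, Finset.sum_ite_eq']
      rw [if_pos]
      exact Finset.mem_filter.2 ⟨hm0, rfl⟩
    rw [← hcoeff, hz, coeff_zero]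
  · -- easy direction
    refine le_iInf fun a => le_iInf fun ha => ?_
    rw [hI, Ideal.span_le]
    rintro _ ⟨i, rfl⟩
    have hc : (C (a i) : MvPolynomial (Fin (N + 1)) K) ^ p = C (a i) := by
      rw [← map_pow, hfermat (ha i)]
    show (X i.succ * (X i.succ ^ (p - 1) - X 0 ^ (p - 1)) : MvPolynomial (Fin (N + 1)) K) ∈
      Ideal.span (Set.range fun j : Fin N =>
        (X j.succ - C (a j) * X 0 : MvPolynomial (Fin (N + 1)) K))
    rw [gen_factor hp (X i.succ) (X 0) (C (a i)) hc]
    exact Ideal.mul_mem_right _ _ (Ideal.subset_span ⟨i, rfl⟩)
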